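/- Let β > 0, k > 0 with 2kβ² < 1, and f(z) = z³ - β²z. If z₁ + k f(z₁) = x₁ and z₂ + k f(z₂) = x₂, then (f(z₁) - f(z₂))(x₁ - x₂) ≥ -β²/(1 - 2kβ²) · (x₁ - x₂)²; that is, the Yosida approximation f_k satisfies a one-sided Lipschitz condition with constant β²/(1 - 2kβ²). -/

import Mathlib

/-- One-sided Lipschitz condition for the Yosida approximation with constant
`β²/(1 - 2kβ²)`. -/
theorem yosida_one_sided_lipschitz (β k : ℝ) (hβ : 0 < β) (hk : 0 < k)
    (h : 2 * k * β ^ 2 < 1) (z₁ z₂ x₁ x₂ : ℝ)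
    (h₁ : z₁ + k * (z₁ ^ 3 - β ^ 2 * z₁) = x₁)
    (h₂ : z₂ + k * (z₂ ^ 3 - β ^ 2 * z₂) = x₂) :
    ((z₁ ^ 3 - β ^ 2 * z₁) - (z₂ ^ 3 - β ^ 2 * z₂)) * (x₁ - x₂) ≥
      -(β ^ 2 / (1 - 2 * k * β ^ 2)) * (x₁ - x₂) ^ 2 := by
  subst h₁ h₂
  have hD : 0 < 1 - 2 * k * β ^ 2 := by linarith
  set d := z₁ - z₂ with hd
  set g := z₁ ^ 2 + z₁ * z₂ + z₂ ^ 2 with hg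
  have hg0 : 0 ≤ g := by nlinarith [sq_nonneg (z₁ + z₂), sq_nonneg z₁, sq_nonneg z₂]
  have key : 0 ≤ (((z₁ ^ 3 - β ^ 2 * z₁) - (z₂ ^ 3 - β ^ 2 * z₂)) *
      ((z₁ + k * (z₁ ^ 3 - β ^ 2 * z₁)) - (z₂ + k * (z₂ ^ 3 - β ^ 2 * z₂)))) * (1 - 2 * k * β ^ 2)
      + β ^ 2 * ((z₁ + k * (z₁ ^ 3 - β ^ 2 * z₁)) - (z₂ + k * (z₂ ^ 3 - β ^ 2 * z₂))) ^ 2 := by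
    have e1 : (z₁ ^ 3 - β ^ 2 * z₁) - (z₂ ^ 3 - β ^ 2 * z₂) = d * (g - β ^ 2) := by ring
    have e2 : (z₁ + k * (z₁ ^ 3 - β ^ 2 * z₁)) - (z₂ + k * (z₂ ^ 3 - β ^ 2 * z₂))
        = d * (1 + k * (g - β ^ 2)) := by ring
    rw [e1, e2]
    have ht : 0 < 1 + k * (g - β ^ 2) := by nlinarith
    have hfac : 0 ≤ g * (1 - k * β ^ 2) + k * β ^ 4 := by
      have h1 : (0:ℝ) ≤ 1 - k * β ^ 2 := by nlinarith
      have h2 : (0:ℝ) ≤ k * β ^ 4 := by positivity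
      nlinarith [mul_nonneg hg0 h1]
    have heq2 : d * (g - β ^ 2) * (d * (1 + k * (g - β ^ 2))) * (1 - 2 * k * β ^ 2)
        + β ^ 2 * (d * (1 + k * (g - β ^ 2))) ^ 2
        = d ^ 2 * (1 + k * (g - β ^ 2)) * (g * (1 - k * β ^ 2) + k * β ^ 4) := by ring
    rw [heq2]
    exact mul_nonneg (mul_nonneg (sq_nonneg d) ht.le) hfac
  rw [ge_iff_le, ← sub_nonneg]
  have heq : ((z₁ ^ 3 - β ^ 2 * z₁) - (z₂ ^ 3 - β ^ 2 * z₂)) *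
      ((z₁ + k * (z₁ ^ 3 - β ^ 2 * z₁)) - (z₂ + k * (z₂ ^ 3 - β ^ 2 * z₂)))
      - -(β ^ 2 / (1 - 2 * k * β ^ 2)) *
      ((z₁ + k * (z₁ ^ 3 - β ^ 2 * z₁)) - (z₂ + k * (z₂ ^ 3 - β ^ 2 * z₂))) ^ 2
      = ((((z₁ ^ 3 - β ^ 2 * z₁) - (z₂ ^ 3 - β ^ 2 * z₂)) *
      ((z₁ + k * (z₁ ^ 3 - β ^ 2 * z₁)) - (z₂ + k * (z₂ ^ 3 - β ^ 2 * z₂)))) * (1 - 2 * k * β ^ 2)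
      + β ^ 2 * ((z₁ + k * (z₁ ^ 3 - β ^ 2 * z₁)) - (z₂ + k * (z₂ ^ 3 - β ^ 2 * z₂))) ^ 2)
      / (1 - 2 * k * β ^ 2) := by
    rw [eq_div_iff hD.ne']
    have hc : β ^ 2 / (1 - 2 * k * β ^ 2) * (1 - 2 * k * β ^ 2) = β ^ 2 := div_mul_cancel₀ _ hD.ne'
    linear_combination ((z₁ + k * (z₁ ^ 3 - β ^ 2 * z₁)) - (z₂ + k * (z₂ ^ 3 - β ^ 2 * z₂))) ^ 2 * hc
  rw [heq]
  exact div_nonneg key hD.le
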